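/- Let X ⊆ ℕ, let μ* be an upper density on ℕ, and let (k_n)_{n ≥ 1} be a sequence of pairwise coprime positive integers with ∑_{n ≥ 1} 1/k_n = ∞. For each n ≥ 1 set X_n := {x ∈ X : k_n divides x}. If μ*(X_n) > 0 for only finitely many n, then μ*(X) = 0. In particular, the set {k_n : n ≥ 1} is small. -/

import Mathlib

open Set Filter Topology

/-- An upper quasi-density on ℕ. -/
def IsUpperQuasiDensity (μ : Set ℕ → ℝ) : Prop :=
  μ Set.univ = 1 ∧
  (∀ X : Set ℕ, μ X ≤ 1) ∧
  (∀ X Y : Set ℕ, μ (X ∪ Y) ≤ μ X + μ Y) ∧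
  (∀ (X : Set ℕ) (k : ℕ), 0 < k → μ ((fun x => k * x) '' X) = μ X / k) ∧
  (∀ (X : Set ℕ) (h : ℕ), μ ((fun x => x + h) '' X) = μ X)

/-- An upper density on ℕ: a monotone upper quasi-density. -/
def IsUpperDensity (μ : Set ℕ → ℝ) : Prop :=
  IsUpperQuasiDensity μ ∧ ∀ X Y : Set ℕ, X ⊆ Y → μ X ≤ μ Y

/-- A set of naturals is small if every upper quasi-density vanishes on it. -/
def SmallSet (X : Set ℕ) : Prop :=
  ∀ μ : Set ℕ → ℝ, IsUpperQuasiDensity μ → μ X = 0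

/-- The upper asymptotic density of a set of naturals. -/
noncomputable def upperAsymptoticDensity (X : Set ℕ) : ℝ :=
  limsup (fun n : ℕ => ((X ∩ Set.Icc 1 n).ncard : ℝ) / n) atTop

/-- The arithmetic progression k·ℕ + h. -/
def AP (k h : ℕ) : Set ℕ := {x : ℕ | ∃ m : ℕ, x = k * m + h}

/-- A finite union of arithmetic progressions of ℕ. -/
def IsFinUnionAP (A : Set ℕ) : Prop :=
  ∃ s : Finset (ℕ × ℕ), (∀ p ∈ s, 0 < p.1) ∧ A = ⋃ p ∈ s, AP p.1 p.2

/-- The upper Buck density of a set of naturals. -/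
noncomputable def buckDensity (X : Set ℕ) : ℝ :=
  sInf {d : ℝ | ∃ A : Set ℕ, IsFinUnionAP A ∧ X ⊆ A ∧ d = upperAsymptoticDensity A}

/-- `rk k X` is the number of residues h ∈ [0, k-1] with X ∩ (k·ℕ + h) ≠ ∅. -/
noncomputable def rk (k : ℕ) (X : Set ℕ) : ℕ :=
  {h : ℕ | h < k ∧ (X ∩ AP k h).Nonempty}.ncard

/-- `wk μ k S` is the number of residues h ∈ [0, k-1] with μ(S ∩ (k·ℕ + h)) ≠ 0. -/
noncomputable def wk (μ : Set ℕ → ℝ) (k : ℕ) (S : Set ℕ) : ℕ :=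
  {h : ℕ | h < k ∧ μ (S ∩ AP k h) ≠ 0}.ncard


variable {ν : Set ℕ → ℝ}

lemma quasi_empty (hν : IsUpperQuasiDensity ν) : ν ∅ = 0 := by
  have h := hν.2.2.2.1 ∅ 2 (by norm_num)
  simp only [Set.image_empty] at h
  linarith

lemma quasi_nonneg (hν : IsUpperQuasiDensity ν) (A : Set ℕ) : 0 ≤ ν A := by
  have h1 := hν.1
  have h2 := hν.2.1 Aᶜ
  have h3 := hν.2.2.1 A Aᶜ
  rw [Set.union_compl_self] at h3
  linarith

lemma quasi_subAP (hν : IsUpperQuasiDensity ν) {Y : Set ℕ} {K h : ℕ} (hK : 0 < K)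
    (hY : Y ⊆ AP K h) : ν Y ≤ 1 / K := by
  set Z : Set ℕ := {m | K * m + h ∈ Y} with hZ
  have himg : (fun x => x + h) '' ((fun x => K * x) '' Z) = Y := by
    ext x
    simp only [Set.mem_image, Set.mem_setOf_eq, hZ]
    constructor
    · rintro ⟨y, ⟨m, hm, rfl⟩, rfl⟩; exact hm
    · intro hx
      obtain ⟨m, rfl⟩ := hY hx
      exact ⟨K * m, ⟨m, hx, rfl⟩, rfl⟩
  have e1 := hν.2.2.2.2 ((fun x => K * x) '' Z) h
  rw [himg] at e1
  have e2 := hν.2.2.2.1 Z K hK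
  have e3 := hν.2.1 Z
  have hKR : (0:ℝ) < K := by exact_mod_cast hK
  rw [e1, e2]
  gcongr

lemma quasi_biUnion (hν : IsUpperQuasiDensity ν) (s : Finset ℕ) (A : ℕ → Set ℕ) :
    ν (⋃ h ∈ s, A h) ≤ ∑ h ∈ s, ν (A h) := by
  classical
  induction s using Finset.induction_on with
  | empty => simp [quasi_empty hν]
  | @insert a s ha ih =>
    rw [Finset.set_biUnion_insert, Finset.sum_insert ha]
    exact le_trans (hν.2.2.1 _ _) (by linarith)

lemma quasi_singleton (hν : IsUpperQuasiDensity ν) (a : ℕ) : ν {a} = 0 := by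
  have key : ∀ K : ℕ, 0 < K → ν {a} ≤ 1 / K := by
    intro K hK
    refine quasi_subAP hν (h := a) hK ?_
    rintro x rfl
    exact ⟨0, by simp⟩
  have h0 := quasi_nonneg hν {a}
  rcases eq_or_lt_of_le h0 with h | hpos
  · exact h.symm
  · exfalso
    obtain ⟨K, hK⟩ := exists_nat_gt (1 / ν {a})
    have hKR : (0:ℝ) < K := lt_trans (by positivity) hK
    have hK0 : 0 < K := by exact_mod_cast hKR
    have h1 := key K hK0
    rw [div_lt_iff₀ hpos] at hK
    rw [le_div_iff₀ hKR] at h1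
    nlinarith

lemma quasi_finite (hν : IsUpperQuasiDensity ν) {A : Set ℕ} (hA : A.Finite) : ν A = 0 := by
  refine Set.Finite.induction_on A hA (quasi_empty hν) ?_
  intro a s ha hs ih
  refine le_antisymm ?_ (quasi_nonneg hν _)
  rw [Set.insert_eq]
  have h := hν.2.2.1 {a} s
  rw [quasi_singleton hν a, ih] at h
  linarith

lemma quasi_cover (hν : IsUpperQuasiDensity ν) (X : Set ℕ) (s : Finset ℕ) (K : ℕ)
    (hcov : X ⊆ ⋃ h ∈ s, AP K h) :
    ν X ≤ ∑ h ∈ s, ν (X ∩ AP K h) := by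
  have hXeq : X = ⋃ h ∈ s, (X ∩ AP K h) := by
    ext x
    simp only [Set.mem_iUnion, Set.mem_inter_iff, exists_prop]
    constructor
    · intro hx
      have := hcov hx
      simp only [Set.mem_iUnion, exists_prop] at this
      obtain ⟨h, hh, hAP⟩ := this
      exact ⟨h, hh, hx, hAP⟩
    · rintro ⟨h, hh, hx, -⟩; exact hx
  calc ν X = ν (⋃ h ∈ s, (X ∩ AP K h)) := by rw [← hXeq]
    _ ≤ _ := quasi_biUnion hν s _

lemma count_lemma (T : Finset ℕ) (f : ℕ → ℕ) (hf : ∀ n ∈ T, 0 < f n)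
    (hcop : ∀ m ∈ T, ∀ n ∈ T, m ≠ n → Nat.Coprime (f m) (f n)) :
    ((Finset.range (∏ n ∈ T, f n)).filter (fun h => ∀ n ∈ T, ¬ f n ∣ h)).card
      ≤ ∏ n ∈ T, (f n - 1) := by
  classical
  set s := (Finset.range (∏ n ∈ T, f n)).filter (fun h => ∀ n ∈ T, ¬ f n ∣ h) with hs
  set t := T.pi (fun n => (Finset.range (f n)).erase 0) with ht
  have hcard : t.card = ∏ n ∈ T, (f n - 1) := by
    rw [ht, Finset.card_pi]
    refine Finset.prod_congr rfl fun n hn => ?_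
    rw [Finset.card_erase_of_mem (Finset.mem_range.mpr (hf n hn)), Finset.card_range]
  rw [← hcard]
  refine Finset.card_le_card_of_injOn (fun h => fun n _ => h % f n) ?_ ?_
  · intro h hh
    rw [hs, Finset.mem_coe, Finset.mem_filter] at hh
    rw [Finset.mem_coe, Finset.mem_pi]
    intro n hn
    refine Finset.mem_erase.mpr ⟨?_, Finset.mem_range.mpr (Nat.mod_lt _ (hf n hn))⟩
    intro h0
    exact hh.2 n hn (Nat.dvd_of_mod_eq_zero h0)
  · intro h₁ hh₁ h₂ hh₂ heq
    simp only [hs, Finset.coe_filter, Set.mem_setOf_eq, Finset.mem_range] at hh₁ hh₂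
    have hmod : ∀ n ∈ T, h₁ % f n = h₂ % f n := by
      intro n hn
      exact congrFun (congrFun heq n) hn
    have hdvd : ∀ n ∈ T, (f n : ℤ) ∣ (h₂ : ℤ) - h₁ :=
      fun n hn => Nat.ModEq.dvd (hmod n hn)
    have hpair : (↑T : Set ℕ).Pairwise (Function.onFun IsCoprime fun n => (f n : ℤ)) := by
      intro m hm n hn hmn
      exact Nat.isCoprime_iff_coprime.mpr (hcop m hm n hn hmn)
    have hProd : (∏ n ∈ T, (f n : ℤ)) ∣ (h₂ : ℤ) - h₁ :=
      Finset.prod_dvd_of_coprime hpair hdvd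
    rw [← Nat.cast_prod] at hProd
    have habs : |(h₂ : ℤ) - h₁| < ((∏ n ∈ T, f n : ℕ) : ℤ) := by
      have c1 : (h₁ : ℤ) < ((∏ n ∈ T, f n : ℕ) : ℤ) := by exact_mod_cast hh₁.1
      have c2 : (h₂ : ℤ) < ((∏ n ∈ T, f n : ℕ) : ℤ) := by exact_mod_cast hh₂.1
      have c3 : (0:ℤ) ≤ (h₁ : ℤ) := Int.ofNat_nonneg _
      have c4 : (0:ℤ) ≤ (h₂ : ℤ) := Int.ofNat_nonneg _
      rw [abs_sub_lt_iff]
      constructor <;> linarith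
    have := Int.eq_zero_of_abs_lt_dvd hProd habs
    omega

lemma prod_one_sub_le_exp (T : Finset ℕ) (f : ℕ → ℕ) (hf : ∀ n ∈ T, 1 ≤ f n) :
    ∏ n ∈ T, (1 - 1/(f n : ℝ)) ≤ Real.exp (-∑ n ∈ T, 1/(f n : ℝ)) := by
  have he : Real.exp (-∑ n ∈ T, 1/(f n:ℝ)) = ∏ n ∈ T, Real.exp (-(1/(f n:ℝ))) := by
    rw [← Real.exp_sum, ← Finset.sum_neg_distrib]
  rw [he]
  refine Finset.prod_le_prod (fun n hn => ?_) (fun n hn => ?_)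
  · have h1 : (1:ℝ) ≤ f n := by exact_mod_cast hf n hn
    have : 1/(f n:ℝ) ≤ 1 := by
      rw [div_le_one (by linarith)]; linarith
    linarith
  · have := Real.add_one_le_exp (-(1/(f n:ℝ)))
    linarith

lemma prod_cast_div (T : Finset ℕ) (f : ℕ → ℕ) (hf : ∀ n ∈ T, 1 ≤ f n) :
    ((∏ n ∈ T, (f n - 1) : ℕ) : ℝ) / ((∏ n ∈ T, f n : ℕ) : ℝ)
      = ∏ n ∈ T, (1 - 1/(f n : ℝ)) := by
  rw [Nat.cast_prod, Nat.cast_prod, ← Finset.prod_div_distrib]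
  refine Finset.prod_congr rfl fun n hn => ?_
  have h1 : 1 ≤ f n := hf n hn
  have h0 : (f n : ℝ) ≠ 0 := by
    have : (1:ℝ) ≤ f n := by exact_mod_cast h1
    linarith
  rw [Nat.cast_sub h1, Nat.cast_one]
  field_simp

lemma exists_large_partial (f : ℕ → ℝ) (hf : ∀ n, 0 ≤ f n)
    (hdiv : Tendsto (fun n => ∑ i ∈ Finset.range n, f i) atTop atTop)
    (F' : Finset ℕ) (M : ℝ) :
    ∃ N, M < ∑ i ∈ Finset.range N \ F', f i := by
  set C := ∑ i ∈ F', f i with hC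
  have key : ∀ n, ∑ i ∈ Finset.range n, f i - C ≤ ∑ i ∈ Finset.range n \ F', f i := by
    intro n
    have hsub : Finset.range n ∩ F' ⊆ Finset.range n := Finset.inter_subset_left
    have hsplit := Finset.sum_sdiff (f := f) hsub
    rw [Finset.sdiff_inter_self_left] at hsplit
    have hle : ∑ i ∈ Finset.range n ∩ F', f i ≤ C :=
      Finset.sum_le_sum_of_subset_of_nonneg Finset.inter_subset_right (fun i _ _ => hf i)
    linarith
  obtain ⟨N, hN⟩ := (Filter.tendsto_atTop.mp hdiv (M + C + 1)).exists
  exact ⟨N, by have := key N; linarith⟩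


/-- If (k_n) are pairwise coprime positive integers with ∑ 1/k_n = ∞ and
μ*({x ∈ X : k_n ∣ x}) > 0 for only finitely many n, then μ*(X) = 0; in
particular, {k_n : n} is small. -/
theorem density_zero_of_finitely_many_divisible (μ : Set ℕ → ℝ)
    (hμ : IsUpperDensity μ) (X : Set ℕ) (k : ℕ → ℕ) (hpos : ∀ n, 0 < k n)
    (hcop : ∀ m n, m ≠ n → Nat.Coprime (k m) (k n))
    (hdiv : Tendsto (fun n : ℕ => ∑ i ∈ Finset.range n, (1 : ℝ) / (k i : ℝ))
      atTop atTop) :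
    (({n : ℕ | 0 < μ {x ∈ X | k n ∣ x}}.Finite) → μ X = 0) ∧
    SmallSet (Set.range k) := by
  classical
  constructor
  · -- Part 1
    intro hfin
    obtain ⟨hq, hmono⟩ := hμ
    by_cases hone : ∃ n, n ∉ {n : ℕ | 0 < μ {x ∈ X | k n ∣ x}} ∧ k n = 1
    · obtain ⟨n, hn, h1⟩ := hone
      have hXn : {x ∈ X | k n ∣ x} = X := by
        ext x; simp [h1]
      have hnot : ¬ 0 < μ {x ∈ X | k n ∣ x} := hn
      rw [hXn] at hnot
      exact le_antisymm (not_lt.mp hnot) (quasi_nonneg hq X)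
    · push_neg at hone
      refine le_antisymm ?_ (quasi_nonneg hq X)
      by_contra hlt
      push_neg at hlt
      set F' := hfin.toFinset with hF'
      obtain ⟨N, hN⟩ := exists_large_partial (fun i => 1/(k i : ℝ))
        (fun i => by positivity) hdiv F' (-Real.log (μ X))
      set T := Finset.range N \ F' with hT
      have hTF : ∀ n ∈ T, ¬ 0 < μ {x ∈ X | k n ∣ x} := by
        intro n hn
        have h2 := (Finset.mem_sdiff.mp hn).2
        rw [hF', Set.Finite.mem_toFinset] at h2
        exact h2
      have hT2 : ∀ n ∈ T, 2 ≤ k n := by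
        intro n hn
        have := hone n (hTF n hn)
        have := hpos n
        omega
      set K := ∏ n ∈ T, k n with hKdef
      have hK : 0 < K := Finset.prod_pos (fun n _ => hpos n)
      have hKR : (0:ℝ) < K := by exact_mod_cast hK
      have hcov : X ⊆ ⋃ h ∈ Finset.range K, AP K h := by
        intro x _
        simp only [Set.mem_iUnion, exists_prop]
        exact ⟨x % K, Finset.mem_range.mpr (Nat.mod_lt _ hK),
          ⟨x / K, (Nat.div_add_mod x K).symm⟩⟩
      have step1 : μ X ≤ ∑ h ∈ Finset.range K, μ (X ∩ AP K h) :=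
        quasi_cover hq X _ K hcov
      set Pr : ℕ → Prop := fun h => ∀ n ∈ T, ¬ k n ∣ h with hPr
      have hsplit := Finset.sum_filter_add_sum_filter_not (Finset.range K) Pr
        (fun h => μ (X ∩ AP K h))
      have hgood : ∑ h ∈ (Finset.range K).filter Pr, μ (X ∩ AP K h)
          ≤ (((Finset.range K).filter Pr).card : ℝ) * (1/(K:ℝ)) := by
        have := Finset.sum_le_card_nsmul ((Finset.range K).filter Pr)
          (fun h => μ (X ∩ AP K h)) (1/(K:ℝ))
          (fun h _ => quasi_subAP hq hK Set.inter_subset_right)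
        simpa [nsmul_eq_mul] using this
      have hbad : ∑ h ∈ (Finset.range K).filter (fun h => ¬ Pr h), μ (X ∩ AP K h) ≤ 0 := by
        refine Finset.sum_nonpos fun h hh => ?_
        rw [Finset.mem_filter] at hh
        have hex : ∃ n ∈ T, k n ∣ h := by
          have h2 := hh.2
          simp only [hPr] at h2
          push_neg at h2
          exact h2
        obtain ⟨n, hnT, hdvd⟩ := hex
        have hknK : k n ∣ K := Finset.dvd_prod_of_mem _ hnT
        have hsub : X ∩ AP K h ⊆ {x ∈ X | k n ∣ x} := by
          rintro x ⟨hxX, m, rfl⟩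
          exact ⟨hxX, dvd_add (hknK.mul_right m) hdvd⟩
        have hle := hmono _ _ hsub
        have hnotpos := not_lt.mp (hTF n hnT)
        linarith
      have hcount := count_lemma T k (fun n _ => hpos n)
        (fun m _ n _ hmn => hcop m n hmn)
      have hcastle : (((Finset.range K).filter Pr).card : ℝ)
          ≤ ((∏ n ∈ T, (k n - 1) : ℕ) : ℝ) := by exact_mod_cast hcount
      have hchain : μ X ≤ ∏ n ∈ T, (1 - 1/(k n : ℝ)) := by
        rw [← prod_cast_div T k (fun n _ => hpos n)]
        calc μ X ≤ (((Finset.range K).filter Pr).card : ℝ) * (1/(K:ℝ)) := by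
              rw [← hsplit] at step1; linarith
          _ = (((Finset.range K).filter Pr).card : ℝ) / (K:ℝ) := by ring
          _ ≤ ((∏ n ∈ T, (k n - 1) : ℕ) : ℝ) / ((∏ n ∈ T, k n : ℕ) : ℝ) := by
              gcongr
      have hexp := prod_one_sub_le_exp T k (fun n hn => (hpos n))
      have hlast : Real.exp (-(∑ n ∈ T, 1/(k n : ℝ))) < μ X := by
        have hlog : -(∑ n ∈ T, 1/(k n : ℝ)) < Real.log (μ X) := by
          rw [hT]; linarith
        calc Real.exp (-(∑ n ∈ T, 1/(k n : ℝ)))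
            < Real.exp (Real.log (μ X)) := Real.exp_lt_exp.mpr hlog
          _ = μ X := Real.exp_log hlt
      linarith
  · -- Part 2
    intro ν hν
    refine le_antisymm ?_ (quasi_nonneg hν _)
    by_contra hlt
    push_neg at hlt
    set R := Set.range k with hR
    have hprnn : ∀ i : ℕ, 0 ≤ Set.indicator {p : ℕ | p.Prime} (fun n : ℕ => (1:ℝ)/n) i :=
      fun i => Set.indicator_nonneg (fun p _ => by positivity) i
    have hprdiv : Tendsto (fun n => ∑ i ∈ Finset.range n,
        Set.indicator {p : ℕ | p.Prime} (fun n : ℕ => (1:ℝ)/n) i) atTop atTop := by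
      rw [← not_summable_iff_tendsto_nat_atTop_of_nonneg hprnn]
      exact not_summable_one_div_on_primes
    obtain ⟨N, hN⟩ := (Filter.tendsto_atTop.mp hprdiv (-Real.log (ν R) + 1)).exists
    set P := (Finset.range N).filter (fun p => p.Prime) with hP
    have hPsum : ∑ p ∈ P, (1:ℝ)/p = ∑ i ∈ Finset.range N,
        Set.indicator {p : ℕ | p.Prime} (fun n : ℕ => (1:ℝ)/n) i := by
      rw [Finset.sum_filter]
      refine Finset.sum_congr rfl fun i _ => ?_
      simp [Set.indicator_apply]
    have hPprime : ∀ p ∈ P, p.Prime := fun p hp => (Finset.mem_filter.mp hp).2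
    set K := ∏ p ∈ P, p with hKdef
    have hK : 0 < K := Finset.prod_pos (fun p hp => (hPprime p hp).pos)
    have hKR : (0:ℝ) < K := by exact_mod_cast hK
    set E := {r : ℕ | r ∈ R ∧ ¬ Nat.Coprime r K} with hE
    -- E is finite
    have hEfin : E.Finite := by
      have hsub : E ⊆ ⋃ p ∈ (P : Finset ℕ), {r : ℕ | r ∈ R ∧ p ∣ r} := by
        rintro r ⟨hrR, hrnc⟩
        have hg : Nat.gcd r K ≠ 1 := hrnc
        obtain ⟨p, hp, hpd⟩ := Nat.exists_prime_and_dvd hg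
        have hpK : p ∣ K := hpd.trans (Nat.gcd_dvd_right r K)
        have hpr : p ∣ r := hpd.trans (Nat.gcd_dvd_left r K)
        have hpP : p ∈ P := by
          rw [hKdef] at hpK
          obtain ⟨q, hq, hpq⟩ := (Prime.dvd_finset_prod_iff hp.prime _).mp hpK
          rwa [(Nat.prime_dvd_prime_iff_eq hp (hPprime q hq)).mp hpq]
        simp only [Set.mem_iUnion, exists_prop]
        exact ⟨p, hpP, hrR, hpr⟩
      refine Set.Finite.subset (Set.Finite.biUnion P.finite_toSet
        (fun p hp => Set.Subsingleton.finite ?_)) hsub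
      rintro a ⟨⟨m, hm⟩, hpa⟩ b ⟨⟨n, hn⟩, hpb⟩
      by_contra hab
      have hmn : m ≠ n := by
        rintro rfl
        rw [hm] at hn
        exact hab hn
      have hgcd : Nat.gcd (k m) (k n) = 1 := hcop m n hmn
      have hpd : p ∣ Nat.gcd (k m) (k n) := Nat.dvd_gcd (hm ▸ hpa) (hn ▸ hpb)
      rw [hgcd] at hpd
      exact Nat.Prime.one_lt (hPprime p hp) |>.ne' (Nat.dvd_one.mp hpd)
    have hEzero : ν E = 0 := quasi_finite hν hEfin
    -- split
    have hsplit : ν R ≤ ν E + ν (R \ E) := by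
      have hES : E ⊆ R := fun r hr => hr.1
      have : R = E ∪ (R \ E) := (Set.union_diff_cancel hES).symm
      calc ν R = ν (E ∪ (R \ E)) := by rw [← this]
        _ ≤ ν E + ν (R \ E) := hν.2.2.1 _ _
    -- cover of R \ E by unit residues
    set Hu := (Finset.range K).filter (fun h => Nat.Coprime h K) with hHu
    have hcov : R \ E ⊆ ⋃ h ∈ Hu, AP K h := by
      rintro x ⟨hxR, hxE⟩
      have hxco : Nat.Coprime x K := by
        by_contra hc
        exact hxE ⟨hxR, hc⟩
      have hmodco : Nat.Coprime (x % K) K := by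
        have h1 : Nat.gcd K x = Nat.gcd (x % K) K := Nat.gcd_rec K x
        have h2 : Nat.gcd K x = Nat.gcd x K := Nat.gcd_comm K x
        unfold Nat.Coprime at hxco ⊢
        rw [← h1, h2, hxco]
      simp only [Set.mem_iUnion, exists_prop]
      refine ⟨x % K, Finset.mem_filter.mpr ⟨Finset.mem_range.mpr (Nat.mod_lt _ hK), hmodco⟩,
        ⟨x / K, (Nat.div_add_mod x K).symm⟩⟩
    have step1 : ν (R \ E) ≤ ∑ h ∈ Hu, ν ((R \ E) ∩ AP K h) :=
      quasi_cover hν _ Hu K hcov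
    have hterm : ∑ h ∈ Hu, ν ((R \ E) ∩ AP K h) ≤ (Hu.card : ℝ) * (1/(K:ℝ)) := by
      have := Finset.sum_le_card_nsmul Hu (fun h => ν ((R \ E) ∩ AP K h)) (1/(K:ℝ))
        (fun h _ => quasi_subAP hν hK Set.inter_subset_right)
      simpa [nsmul_eq_mul] using this
    -- count unit residues
    have hHusub : Hu ⊆ (Finset.range (∏ p ∈ P, (fun p => p) p)).filter
        (fun h => ∀ p ∈ P, ¬ (fun p => p) p ∣ h) := by
      intro h hh
      rw [hHu, Finset.mem_filter] at hh
      refine Finset.mem_filter.mpr ⟨by simpa using hh.1, ?_⟩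
      intro p hpP hpd
      have hpK : p ∣ K := Finset.dvd_prod_of_mem _ hpP
      have : p ∣ Nat.gcd h K := Nat.dvd_gcd hpd hpK
      rw [hh.2] at this
      exact (hPprime p hpP).one_lt.ne' (Nat.dvd_one.mp this)
    have hcount := count_lemma P (fun p => p) (fun p hp => (hPprime p hp).pos)
      (fun p hp q hq hpq => (Nat.coprime_primes (hPprime p hp) (hPprime q hq)).mpr hpq)
    have hHucard : (Hu.card : ℝ) ≤ ((∏ p ∈ P, (p - 1) : ℕ) : ℝ) := by
      exact_mod_cast le_trans (Finset.card_le_card hHusub) hcount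
    have hchain : ν R ≤ ∏ p ∈ P, (1 - 1/(p : ℝ)) := by
      rw [← prod_cast_div P (fun p => p) (fun p hp => (hPprime p hp).pos)]
      calc ν R ≤ ν E + ν (R \ E) := hsplit
        _ = ν (R \ E) := by rw [hEzero]; ring
        _ ≤ (Hu.card : ℝ) * (1/(K:ℝ)) := le_trans step1 hterm
        _ = (Hu.card : ℝ) / (K:ℝ) := by ring
        _ ≤ ((∏ p ∈ P, (p - 1) : ℕ) : ℝ) / ((∏ p ∈ P, p : ℕ) : ℝ) := by gcongr
    have hexp := prod_one_sub_le_exp P (fun p => p) (fun p hp => (hPprime p hp).pos)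
    have hlast : Real.exp (-(∑ p ∈ P, 1/(p : ℝ))) < ν R := by
      have hlog : -(∑ p ∈ P, 1/(p : ℝ)) < Real.log (ν R) := by
        rw [hPsum]; linarith
      calc Real.exp (-(∑ p ∈ P, 1/(p : ℝ)))
          < Real.exp (Real.log (ν R)) := Real.exp_lt_exp.mpr hlog
        _ = ν R := Real.exp_log hlt
    linarith
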